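/- arXiv:2207.14252 — 2 statements merged into one kernel-verified Lean document; each statement's English description precedes it below -/
import Mathlib

section
/- Let the excited closed-loop system be x_{k+1} = (A + BK) x_k + B e_k + ω_k with e_k ~ N(0, Σ_e) and ω_k ~ N(0, Σ) independent, and input u_k = K x_k + e_k. Then for any k and window length τ, the expected quadratic cost E[Σ_{j=k}^{k+τ-1} (x_jᵀ Q x_j + u_jᵀ R u_j)] equals the expected cost of the unexcited system x̃_{j+1} = (A+BK) x̃_j + ω̃_j with noise covariance Σ + B Σ_e Bᵀ and input ũ_j = K x̃_j (same initial distribution), plus τ · tr(Σ_e R). -/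
open MeasureTheory Matrix Finset

section AuxExc

variable {Ω : Type*} [MeasurableSpace Ω] {μ : Measure Ω}

lemma exc_expand_prod {n p : ℕ} (M : Matrix (Fin p) (Fin n) ℝ)
    (y : Ω → Fin p → ℝ) (x : Ω → Fin n → ℝ) (ν : Ω → Fin p → ℝ)
    (hrec : ∀ ω, y ω = M.mulVec (x ω) + ν ω) (i l : Fin p) (ω : Ω) :
    y ω i * y ω l
      = (∑ a, ∑ b, M i a * M l b * (x ω a * x ω b))
        + ((∑ a, M i a * (x ω a * ν ω l))
          + ((∑ b, M l b * (x ω b * ν ω i)) + ν ω i * ν ω l)) := by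
  have h1 : (∑ a, M i a * x ω a) * (∑ b, M l b * x ω b)
      = ∑ a, ∑ b, M i a * M l b * (x ω a * x ω b) := by
    rw [Finset.sum_mul_sum]
    exact Finset.sum_congr rfl fun a _ => Finset.sum_congr rfl fun b _ => by ring
  have h2 : (∑ a, M i a * x ω a) * ν ω l = ∑ a, M i a * (x ω a * ν ω l) := by
    rw [Finset.sum_mul]; exact Finset.sum_congr rfl fun a _ => by ring
  have h3 : ν ω i * (∑ b, M l b * x ω b) = ∑ b, M l b * (x ω b * ν ω i) := by
    rw [Finset.mul_sum]; exact Finset.sum_congr rfl fun b _ => by ring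
  have hy : ∀ j, y ω j = (∑ a, M j a * x ω a) + ν ω j := by
    intro j; rw [hrec]; simp [Matrix.mulVec, dotProduct]
  rw [hy i, hy l, ← h1, ← h2, ← h3]; ring

lemma exc_integ_prod {n p : ℕ} (M : Matrix (Fin p) (Fin n) ℝ)
    (y : Ω → Fin p → ℝ) (x : Ω → Fin n → ℝ) (ν : Ω → Fin p → ℝ)
    (hrec : ∀ ω, y ω = M.mulVec (x ω) + ν ω)
    (hix : ∀ a b, Integrable (fun ω => x ω a * x ω b) μ)
    (hic : ∀ a b, Integrable (fun ω => x ω a * ν ω b) μ)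
    (hin : ∀ a b, Integrable (fun ω => ν ω a * ν ω b) μ)
    (i l : Fin p) :
    Integrable (fun ω => y ω i * y ω l) μ := by
  have := funext (exc_expand_prod M y x ν hrec i l)
  rw [this]
  exact (integrable_finset_sum _ fun a _ => integrable_finset_sum _ fun b _ =>
      (hix a b).const_mul _).add
    (((integrable_finset_sum _ fun a _ => (hic a l).const_mul _).add
      ((integrable_finset_sum _ fun b _ => (hic b i).const_mul _).add (hin i l))))

lemma exc_int_prod {n p : ℕ} (M : Matrix (Fin p) (Fin n) ℝ)
    (N : Matrix (Fin p) (Fin p) ℝ)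
    (y : Ω → Fin p → ℝ) (x : Ω → Fin n → ℝ) (ν : Ω → Fin p → ℝ)
    (hrec : ∀ ω, y ω = M.mulVec (x ω) + ν ω)
    (hcross : ∀ a b, ∫ ω, x ω a * ν ω b ∂μ = 0)
    (hcov : ∀ a b, ∫ ω, ν ω a * ν ω b ∂μ = N a b)
    (hix : ∀ a b, Integrable (fun ω => x ω a * x ω b) μ)
    (hic : ∀ a b, Integrable (fun ω => x ω a * ν ω b) μ)
    (hin : ∀ a b, Integrable (fun ω => ν ω a * ν ω b) μ)
    (i l : Fin p) :
    ∫ ω, y ω i * y ω l ∂μ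
      = (∑ a, ∑ b, M i a * M l b * ∫ ω, x ω a * x ω b ∂μ) + N i l := by
  have hI1 : Integrable (fun ω => ∑ a, ∑ b, M i a * M l b * (x ω a * x ω b)) μ :=
    integrable_finset_sum _ fun a _ => integrable_finset_sum _ fun b _ =>
      (hix a b).const_mul _
  have hI2 : Integrable (fun ω => ∑ a, M i a * (x ω a * ν ω l)) μ :=
    integrable_finset_sum _ fun a _ => (hic a l).const_mul _
  have hI3 : Integrable (fun ω => ∑ b, M l b * (x ω b * ν ω i)) μ :=
    integrable_finset_sum _ fun b _ => (hic b i).const_mul _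
  have hI4 := hin i l
  have hI34 : Integrable
      (fun ω => ∑ b, M l b * (x ω b * ν ω i) + ν ω i * ν ω l) μ := hI3.add hI4
  have hI234 : Integrable (fun ω => ∑ a, M i a * (x ω a * ν ω l)
      + (∑ b, M l b * (x ω b * ν ω i) + ν ω i * ν ω l)) μ := hI2.add hI34
  rw [funext (exc_expand_prod M y x ν hrec i l)]
  rw [integral_add hI1 hI234, integral_add hI2 hI34, integral_add hI3 hI4]
  rw [integral_finset_sum _ fun a _ => integrable_finset_sum _ fun b _ =>
      (hix a b).const_mul _,
      integral_finset_sum _ fun a _ => (hic a l).const_mul _,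
      integral_finset_sum _ fun b _ => (hic b i).const_mul _]
  simp only [integral_const_mul, hcross, hcov, mul_zero, Finset.sum_const_zero,
    add_zero, zero_add]
  refine congrArg (· + N i l) ?_
  exact Finset.sum_congr rfl fun a _ => by
    rw [integral_finset_sum _ fun b _ => (hix a b).const_mul _]
    exact Finset.sum_congr rfl fun b _ => integral_const_mul _ _

lemma exc_quad_eq {p : ℕ} (R : Matrix (Fin p) (Fin p) ℝ) (v : Fin p → ℝ) :
    dotProduct v (R.mulVec v) = ∑ i, ∑ l, R i l * (v i * v l) := by
  simp only [dotProduct, Matrix.mulVec, Finset.mul_sum]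
  exact Finset.sum_congr rfl fun i _ => Finset.sum_congr rfl fun l _ => by ring

lemma exc_quad_integrable {p : ℕ} (R : Matrix (Fin p) (Fin p) ℝ) (y : Ω → Fin p → ℝ)
    (hi : ∀ i l, Integrable (fun ω => y ω i * y ω l) μ) :
    Integrable (fun ω => dotProduct (y ω) (R.mulVec (y ω))) μ := by
  have : (fun ω => dotProduct (y ω) (R.mulVec (y ω)))
      = fun ω => ∑ i, ∑ l, R i l * (y ω i * y ω l) := funext fun ω => exc_quad_eq R (y ω)
  rw [this]
  exact integrable_finset_sum _ fun i _ => integrable_finset_sum _ fun l _ =>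
    (hi i l).const_mul _

lemma exc_quad_integral {p : ℕ} (R : Matrix (Fin p) (Fin p) ℝ) (y : Ω → Fin p → ℝ)
    (hi : ∀ i l, Integrable (fun ω => y ω i * y ω l) μ) :
    ∫ ω, dotProduct (y ω) (R.mulVec (y ω)) ∂μ
      = ∑ i, ∑ l, R i l * ∫ ω, y ω i * y ω l ∂μ := by
  have : (fun ω => dotProduct (y ω) (R.mulVec (y ω)))
      = fun ω => ∑ i, ∑ l, R i l * (y ω i * y ω l) := funext fun ω => exc_quad_eq R (y ω)
  rw [this, integral_finset_sum _ fun i _ => integrable_finset_sum _ fun l _ =>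
    (hi i l).const_mul (R i l)]
  exact Finset.sum_congr rfl fun i _ => by
    rw [integral_finset_sum _ fun l _ => (hi i l).const_mul (R i l)]
    exact Finset.sum_congr rfl fun l _ => integral_const_mul _ _

end AuxExc

/-- **Theorem 1 of the paper.** For the excited closed-loop system
`x_{j+1} = (A + B K) x_j + B e_j + ω_j` with input `u_j = K x_j + e_j`, where
`e_j ~ N(0, Σe)` and `ω_j ~ N(0, Σ)` are zero-mean, mutually independent and
independent of the state (expressed through moment conditions), the expected
windowed quadratic cost equals that of the unexcited system
`x̃_{j+1} = (A + B K) x̃_j + ω̃_j` with inputs `ũ_j = K x̃_j` and merged noise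
covariance `Σ + B Σe Bᵀ` (same initial second moments), plus `τ · tr(Σe R)`. -/
theorem excitation_cost_decomposition
    {Ω : Type*} [MeasurableSpace Ω] (μ : Measure Ω) [IsProbabilityMeasure μ]
    {n m : ℕ} (A : Matrix (Fin n) (Fin n) ℝ) (B : Matrix (Fin n) (Fin m) ℝ)
    (K : Matrix (Fin m) (Fin n) ℝ)
    (Q : Matrix (Fin n) (Fin n) ℝ) (R : Matrix (Fin m) (Fin m) ℝ)
    (hQ : Q.IsSymm) (hQpd : Q.PosDef) (hR : R.IsSymm) (hRpd : R.PosDef)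
    (S : Matrix (Fin n) (Fin n) ℝ) (Se : Matrix (Fin m) (Fin m) ℝ)
    (hS : S.PosSemidef) (hSe : Se.PosSemidef)
    (x xt : ℕ → Ω → Fin n → ℝ) (e : ℕ → Ω → Fin m → ℝ) (w wt : ℕ → Ω → Fin n → ℝ)
    (u : ℕ → Ω → Fin m → ℝ) (ut : ℕ → Ω → Fin m → ℝ)
    -- dynamics and inputs
    (hx : ∀ j ω, x (j + 1) ω = (A + B * K).mulVec (x j ω) + B.mulVec (e j ω) + w j ω)
    (hu : ∀ j ω, u j ω = K.mulVec (x j ω) + e j ω)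
    (hxt : ∀ j ω, xt (j + 1) ω = (A + B * K).mulVec (xt j ω) + wt j ω)
    (hut : ∀ j ω, ut j ω = K.mulVec (xt j ω))
    -- excitation noise: zero mean, covariance Σe, uncorrelated with the state
    (hemean : ∀ j i, ∫ ω, e j ω i ∂μ = 0)
    (hecov : ∀ j i l, ∫ ω, e j ω i * e j ω l ∂μ = Se i l)
    (hxe : ∀ j i l, ∫ ω, x j ω i * e j ω l ∂μ = 0)
    -- combined driving noise: zero mean, uncorrelated with state, merged covariance
    (hmean : ∀ j i, ∫ ω, (B.mulVec (e j ω) + w j ω) i ∂μ = 0)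
    (hmeant : ∀ j i, ∫ ω, wt j ω i ∂μ = 0)
    (hcross : ∀ j i l, ∫ ω, x j ω i * (B.mulVec (e j ω) + w j ω) l ∂μ = 0)
    (hcrosst : ∀ j i l, ∫ ω, xt j ω i * wt j ω l ∂μ = 0)
    (hnoise : ∀ j i l,
      ∫ ω, (B.mulVec (e j ω) + w j ω) i * (B.mulVec (e j ω) + w j ω) l ∂μ
        = (S + B * Se * Bᵀ) i l)
    (hnoiset : ∀ j i l, ∫ ω, wt j ω i * wt j ω l ∂μ = (S + B * Se * Bᵀ) i l)
    -- integrability of all relevant second moments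
    (hint : ∀ j i l, Integrable (fun ω => x j ω i * x j ω l) μ)
    (hintt : ∀ j i l, Integrable (fun ω => xt j ω i * xt j ω l) μ)
    (hinte : ∀ j i l, Integrable (fun ω => e j ω i * e j ω l) μ)
    (hintxe : ∀ j i l, Integrable (fun ω => x j ω i * e j ω l) μ)
    (hintc : ∀ j i l, Integrable (fun ω => x j ω i * (B.mulVec (e j ω) + w j ω) l) μ)
    (hintct : ∀ j i l, Integrable (fun ω => xt j ω i * wt j ω l) μ)
    (hintn : ∀ j i l,
      Integrable (fun ω => (B.mulVec (e j ω) + w j ω) i * (B.mulVec (e j ω) + w j ω) l) μ)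
    (hintnt : ∀ j i l, Integrable (fun ω => wt j ω i * wt j ω l) μ)
    -- same initial (second-moment) distribution at the start of the window
    (k τ : ℕ)
    (hinit : ∀ i l, ∫ ω, x k ω i * x k ω l ∂μ = ∫ ω, xt k ω i * xt k ω l ∂μ) :
    ∫ ω, ∑ j ∈ range τ,
        (dotProduct (x (k + j) ω) (Q.mulVec (x (k + j) ω))
          + dotProduct (u (k + j) ω) (R.mulVec (u (k + j) ω))) ∂μ
      = (∫ ω, ∑ j ∈ range τ,
          (dotProduct (xt (k + j) ω) (Q.mulVec (xt (k + j) ω))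
            + dotProduct (ut (k + j) ω) (R.mulVec (ut (k + j) ω))) ∂μ)
        + (τ : ℝ) * (Se * R).trace := by
  classical
  set M := A + B * K with hM
  set N := S + B * Se * Bᵀ with hN
  -- second moments of x and xt agree on the whole window
  have hP : ∀ j i l, ∫ ω, x (k + j) ω i * x (k + j) ω l ∂μ
      = ∫ ω, xt (k + j) ω i * xt (k + j) ω l ∂μ := by
    intro j
    induction j with
    | zero => simpa using hinit
    | succ j ih =>
      intro i l
      have hrx : ∀ ω, x (k + j + 1) ω
          = M.mulVec (x (k + j) ω) + (B.mulVec (e (k + j) ω) + w (k + j) ω) := by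
        intro ω; rw [hx (k + j) ω, add_assoc]
      have h1 := exc_int_prod (μ := μ) M N _ _ _ hrx (hcross (k + j)) (hnoise (k + j))
        (hint (k + j)) (hintc (k + j)) (hintn (k + j)) i l
      have h2 := exc_int_prod (μ := μ) M N _ _ _ (hxt (k + j)) (hcrosst (k + j))
        (hnoiset (k + j)) (hintt (k + j)) (hintct (k + j)) (hintnt (k + j)) i l
      show ∫ ω, x (k + j + 1) ω i * x (k + j + 1) ω l ∂μ
          = ∫ ω, xt (k + j + 1) ω i * xt (k + j + 1) ω l ∂μ
      rw [h1, h2]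
      congr 1
      exact Finset.sum_congr rfl fun a _ => Finset.sum_congr rfl fun b _ => by rw [ih a b]
  -- integrability of products of inputs
  have hintu : ∀ t i l, Integrable (fun ω => u t ω i * u t ω l) μ := fun t i l =>
    exc_integ_prod K (u t) (x t) (e t) (hu t) (hint t) (hintxe t) (hinte t) i l
  have hrut : ∀ t : ℕ, ∀ ω, ut t ω = K.mulVec (xt t ω) + (fun _ : Fin m => (0 : ℝ)) := by
    intro t ω; rw [hut t ω]; funext i; simp
  have hiz : ∀ t : ℕ, ∀ (a : Fin n) (b : Fin m),
      Integrable (fun ω => xt t ω a * (fun _ : Fin m => (0 : ℝ)) b) μ := by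
    intro t a b; simpa using (integrable_const (0 : ℝ) : Integrable (fun _ : Ω => (0:ℝ)) μ)
  have hiz2 : ∀ (a b : Fin m),
      Integrable (fun ω => (fun _ : Fin m => (0 : ℝ)) a * (fun _ : Fin m => (0 : ℝ)) b) μ := by
    intro a b; simpa using (integrable_const (0 : ℝ) : Integrable (fun _ : Ω => (0:ℝ)) μ)
  have hintut : ∀ t i l, Integrable (fun ω => ut t ω i * ut t ω l) μ := fun t i l =>
    exc_integ_prod K (ut t) (xt t) _ (hrut t) (hintt t) (hiz t) hiz2 i l
  -- second moments of the inputs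
  have hU : ∀ t i l, ∫ ω, u t ω i * u t ω l ∂μ
      = (∑ a, ∑ b, K i a * K l b * ∫ ω, x t ω a * x t ω b ∂μ) + Se i l := fun t i l =>
    exc_int_prod (μ := μ) K Se _ _ _ (hu t) (hxe t) (hecov t)
      (hint t) (hintxe t) (hinte t) i l
  have hUt : ∀ t i l, ∫ ω, ut t ω i * ut t ω l ∂μ
      = (∑ a, ∑ b, K i a * K l b * ∫ ω, xt t ω a * xt t ω b ∂μ)
        + (0 : Matrix (Fin m) (Fin m) ℝ) i l := fun t i l =>
    exc_int_prod (μ := μ) K 0 _ _ _ (hrut t)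
      (fun a b => by simp) (fun a b => by simp)
      (hintt t) (hiz t) hiz2 i l
  -- trace identity
  have htr : ∑ i, ∑ l, R i l * Se i l = (Se * R).trace := by
    rw [Matrix.trace, ]
    simp only [Matrix.diag_apply, Matrix.mul_apply]
    exact Finset.sum_congr rfl fun i _ => Finset.sum_congr rfl fun l _ => by
      rw [hR.apply i l]; ring
  -- per-step expected cost identity
  have key : ∀ j : ℕ,
      ∫ ω, (dotProduct (x (k + j) ω) (Q.mulVec (x (k + j) ω))
        + dotProduct (u (k + j) ω) (R.mulVec (u (k + j) ω))) ∂μ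
      = (∫ ω, (dotProduct (xt (k + j) ω) (Q.mulVec (xt (k + j) ω))
          + dotProduct (ut (k + j) ω) (R.mulVec (ut (k + j) ω))) ∂μ)
        + (Se * R).trace := by
    intro j
    rw [integral_add (exc_quad_integrable Q (x (k + j)) (hint (k + j)))
        (exc_quad_integrable R (u (k + j)) (hintu (k + j))),
      integral_add (exc_quad_integrable Q (xt (k + j)) (hintt (k + j)))
        (exc_quad_integrable R (ut (k + j)) (hintut (k + j))),
      exc_quad_integral Q (x (k + j)) (hint (k + j)),
      exc_quad_integral R (u (k + j)) (hintu (k + j)),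
      exc_quad_integral Q (xt (k + j)) (hintt (k + j)),
      exc_quad_integral R (ut (k + j)) (hintut (k + j))]
    have hQeq : (∑ i, ∑ l, Q i l * ∫ ω, x (k + j) ω i * x (k + j) ω l ∂μ)
        = ∑ i, ∑ l, Q i l * ∫ ω, xt (k + j) ω i * xt (k + j) ω l ∂μ :=
      Finset.sum_congr rfl fun i _ => Finset.sum_congr rfl fun l _ => by rw [hP j i l]
    have hReq : (∑ i, ∑ l, R i l * ∫ ω, u (k + j) ω i * u (k + j) ω l ∂μ)
        = (∑ i, ∑ l, R i l * ∫ ω, ut (k + j) ω i * ut (k + j) ω l ∂μ) + (Se * R).trace := by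
      rw [← htr, ← Finset.sum_add_distrib]
      refine Finset.sum_congr rfl fun i _ => ?_
      rw [← Finset.sum_add_distrib]
      refine Finset.sum_congr rfl fun l _ => ?_
      rw [hU (k + j) i l, hUt (k + j) i l]
      have : (∑ a, ∑ b, K i a * K l b * ∫ ω, x (k + j) ω a * x (k + j) ω b ∂μ)
          = ∑ a, ∑ b, K i a * K l b * ∫ ω, xt (k + j) ω a * xt (k + j) ω b ∂μ :=
        Finset.sum_congr rfl fun a _ => Finset.sum_congr rfl fun b _ => by rw [hP j a b]
      rw [this]
      simp only [Matrix.zero_apply, add_zero]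
      ring
    rw [hQeq, hReq]; ring
  -- assemble the window
  have hIcost : ∀ j : ℕ, Integrable (fun ω =>
      dotProduct (x (k + j) ω) (Q.mulVec (x (k + j) ω))
        + dotProduct (u (k + j) ω) (R.mulVec (u (k + j) ω))) μ := fun j =>
    (exc_quad_integrable Q (x (k + j)) (hint (k + j))).add
      (exc_quad_integrable R (u (k + j)) (hintu (k + j)))
  have hIcostt : ∀ j : ℕ, Integrable (fun ω =>
      dotProduct (xt (k + j) ω) (Q.mulVec (xt (k + j) ω))
        + dotProduct (ut (k + j) ω) (R.mulVec (ut (k + j) ω))) μ := fun j =>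
    (exc_quad_integrable Q (xt (k + j)) (hintt (k + j))).add
      (exc_quad_integrable R (ut (k + j)) (hintut (k + j)))
  rw [integral_finset_sum _ (fun j _ => hIcost j),
    integral_finset_sum _ (fun j _ => hIcostt j)]
  calc ∑ j ∈ range τ, ∫ ω, (dotProduct (x (k + j) ω) (Q.mulVec (x (k + j) ω))
        + dotProduct (u (k + j) ω) (R.mulVec (u (k + j) ω))) ∂μ
      = ∑ j ∈ range τ, ((∫ ω, (dotProduct (xt (k + j) ω) (Q.mulVec (xt (k + j) ω))
          + dotProduct (ut (k + j) ω) (R.mulVec (ut (k + j) ω))) ∂μ)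
        + (Se * R).trace) := Finset.sum_congr rfl fun j _ => key j
    _ = _ := by
      rw [Finset.sum_add_distrib, Finset.sum_const, Finset.card_range, nsmul_eq_mul]
end

section
/- Let X be a nonnegative random variable (observed cost) and let κ⁻ < κ⁺ be random thresholds depending on a parameter θ with distribution p_θ. Suppose for every θ in a set Θ with P(Θ) ≥ ν we have P(X ∉ (κ⁻(θ), κ⁺(θ)) | θ) ≤ η. If (κ_ν⁻, κ_ν⁺) satisfies κ_ν⁻ ≤ κ⁻(θ) and κ_ν⁺ ≥ κ⁺(θ) for all θ ∈ Θ, then P(X ∉ (κ_ν⁻, κ_ν⁺)) ≤ 1 − ν(1 − η). -/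
open MeasureTheory

/-- Inner-measure style bound on a lower Lebesgue integral: if `f ≤ c` on `Θ` and
`f ≤ c + d` everywhere, then `∫⁻ f ≤ c + d * (1 - p Θ)`, with no measurability
assumption on `f` or `Θ`. -/
lemma lintegral_le_of_le_on {T : Type*} [MeasurableSpace T] (p : Measure T)
    [IsProbabilityMeasure p] (f : T → ENNReal) (c d : ENNReal) (Θ : Set T)
    (hfc : ∀ θ ∈ Θ, f θ ≤ c) (hfcd : ∀ θ, f θ ≤ c + d) :
    ∫⁻ θ, f θ ∂p ≤ c + d * (1 - p Θ) := by
  rw [lintegral_def]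
  refine iSup₂_le fun g hg => ?_
  set A : Set T := {θ | c < g θ} with hAdef
  have hA : MeasurableSet A := measurableSet_lt measurable_const g.measurable
  have hAΘ : Θ ⊆ Aᶜ := by
    intro θ hθ hθA
    exact absurd ((hg θ).trans (hfc θ hθ)) (not_le.mpr hθA)
  have hpA : p A ≤ 1 - p Θ := by
    have h1 : p A + p Θ ≤ 1 := by
      calc p A + p Θ ≤ p A + p Aᶜ := by
            exact add_le_add_right (measure_mono hAΘ) _
        _ = p Set.univ := measure_add_measure_compl hA
        _ = 1 := measure_univ
    exact ENNReal.le_sub_of_add_le_right (measure_ne_top p Θ) h1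
  have hgle : ∀ θ, g θ ≤ c + A.indicator (fun _ => d) θ := by
    intro θ
    by_cases hθ : θ ∈ A
    · rw [Set.indicator_of_mem hθ]
      exact (hg θ).trans (hfcd θ)
    · rw [Set.indicator_of_notMem hθ, add_zero]
      exact not_lt.mp hθ
  calc g.lintegral p = ∫⁻ θ, g θ ∂p := (g.lintegral_eq_lintegral p).symm
    _ ≤ ∫⁻ θ, (c + A.indicator (fun _ => d) θ) ∂p := lintegral_mono hgle
    _ = c + d * p A := by
        rw [lintegral_add_left measurable_const, lintegral_const, measure_univ, mul_one,
          lintegral_indicator hA, setLIntegral_const]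
    _ ≤ c + d * (1 - p Θ) := add_le_add_right (mul_le_mul_right hpA d) c

/-- Two-stage model of the uncertainty-aware trigger: the parameter
`θ` has law `p`, and conditionally on `θ` the observed cost has law `ν θ`. If on a
parameter set `Θ` of probability at least `ν₀` the per-parameter confidence intervals
`(κ⁻(θ), κ⁺(θ))` miss the cost with conditional probability at most `η`, and
`(κν⁻, κν⁺)` contains all those intervals, then the overall probability that the cost
leaves `(κν⁻, κν⁺)` is at most `1 − ν₀(1 − η)`. -/
theorem widened_trigger_bound
    {T : Type*} [MeasurableSpace T] (p : Measure T) [IsProbabilityMeasure p]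
    (ν : T → Measure ℝ) (hνprob : ∀ θ, IsProbabilityMeasure (ν θ))
    (hX : ∀ θ, ν θ {x : ℝ | x < 0} = 0)  -- the observed cost is nonnegative
    (κlo κhi : T → ℝ) (hκ : ∀ θ, κlo θ < κhi θ)
    (Θ : Set T) (η ν₀ : ℝ)
    (hη : η ∈ Set.Icc (0 : ℝ) 1) (hν₀ : ν₀ ∈ Set.Icc (0 : ℝ) 1)
    (hΘ : ENNReal.ofReal ν₀ ≤ p Θ)
    (hcond : ∀ θ ∈ Θ,
      ν θ {x : ℝ | x ∉ Set.Ioo (κlo θ) (κhi θ)} ≤ ENNReal.ofReal η)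
    (κνlo κνhi : ℝ)
    (hlo : ∀ θ ∈ Θ, κνlo ≤ κlo θ) (hhi : ∀ θ ∈ Θ, κhi θ ≤ κνhi) :
    ∫⁻ θ, ν θ {x : ℝ | x ∉ Set.Ioo κνlo κνhi} ∂p
      ≤ ENNReal.ofReal (1 - ν₀ * (1 - η)) := by
  obtain ⟨hη0, hη1⟩ := hη
  obtain ⟨hν₀0, hν₀1⟩ := hν₀
  have key := lintegral_le_of_le_on p
    (fun θ => ν θ {x : ℝ | x ∉ Set.Ioo κνlo κνhi})
    (ENNReal.ofReal η) (ENNReal.ofReal (1 - η)) Θ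
    (by
      intro θ hθ
      refine le_trans (measure_mono ?_) (hcond θ hθ)
      intro x hx hx'
      exact hx ⟨lt_of_le_of_lt (hlo θ hθ) hx'.1, lt_of_lt_of_le hx'.2 (hhi θ hθ)⟩)
    (by
      intro θ
      have h1 : ENNReal.ofReal η + ENNReal.ofReal (1 - η) = 1 := by
        rw [← ENNReal.ofReal_add hη0 (by linarith)]
        norm_num
      rw [h1]
      haveI := hνprob θ
      exact prob_le_one)
  refine key.trans ?_
  have h2 : (1 : ENNReal) - p Θ ≤ ENNReal.ofReal (1 - ν₀) := by
    have : ENNReal.ofReal (1 - ν₀) = 1 - ENNReal.ofReal ν₀ := by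
      rw [← ENNReal.ofReal_one, ← ENNReal.ofReal_sub _ hν₀0]
    rw [this]
    exact tsub_le_tsub_left hΘ 1
  calc ENNReal.ofReal η + ENNReal.ofReal (1 - η) * (1 - p Θ)
      ≤ ENNReal.ofReal η + ENNReal.ofReal (1 - η) * ENNReal.ofReal (1 - ν₀) :=
        add_le_add_right (mul_le_mul_right h2 _) _
    _ = ENNReal.ofReal (η + (1 - η) * (1 - ν₀)) := by
        rw [← ENNReal.ofReal_mul (by linarith), ← ENNReal.ofReal_add hη0
          (mul_nonneg (by linarith) (by linarith))]
    _ = ENNReal.ofReal (1 - ν₀ * (1 - η)) := by ring_nf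
end
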